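/- Let E be a finite-dimensional real inner product space, and let ε > 0. For x, y ∈ E with ‖x‖ ≥ ε and ‖y‖ ≥ ε, one has ‖ x/‖x‖³ − y/‖y‖³ ‖ ≤ (2/ε³)·‖x − y‖. Equivalently, the gradient ∇f(x) = −x/‖x‖³ of the function f(x) = 1/‖x‖ is Lipschitz continuous with constant 2/ε³ on the set M_ε = {x : ‖x‖ ≥ ε}. -/

import Mathlib

/-- Paper's Lemma 4.4: the gradient `x ↦ −x/‖x‖³` of `f(x) = 1/‖x‖` is
`2/ε³`-Lipschitz on `{x : ‖x‖ ≥ ε}`. -/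
theorem stmt5 {E : Type*} [NormedAddCommGroup E] [InnerProductSpace ℝ E]
    [FiniteDimensional ℝ E] (ε : ℝ) (hε : 0 < ε) (x y : E)
    (hx : ε ≤ ‖x‖) (hy : ε ≤ ‖y‖) :
    ‖(‖x‖ ^ 3)⁻¹ • x - (‖y‖ ^ 3)⁻¹ • y‖ ≤ (2 / ε ^ 3) * ‖x - y‖ := by
  have ha : (0:ℝ) < ‖x‖ := lt_of_lt_of_le hε hx
  have hb : (0:ℝ) < ‖y‖ := lt_of_lt_of_le hε hy
  have ht : (inner ℝ x y : ℝ) ≤ ‖x‖ * ‖y‖ := real_inner_le_norm x y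
  apply le_of_pow_le_pow_left₀ two_ne_zero (by positivity)
  have e1 : ‖(‖x‖ ^ 3)⁻¹ • x - (‖y‖ ^ 3)⁻¹ • y‖ ^ 2
      = (‖x‖^3)⁻¹^2 * ‖x‖^2 - 2 * ((‖x‖^3)⁻¹ * ((‖y‖^3)⁻¹ * (inner ℝ x y : ℝ)))
        + (‖y‖^3)⁻¹^2 * ‖y‖^2 := by
    rw [norm_sub_sq_real, real_inner_smul_left, real_inner_smul_right,
      norm_smul, norm_smul]
    simp [abs_of_pos (by positivity : (0:ℝ) < (‖x‖^3)⁻¹),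
      abs_of_pos (by positivity : (0:ℝ) < (‖y‖^3)⁻¹), mul_pow]
  have e2 : ‖x - y‖ ^ 2 = ‖x‖^2 - 2 * (inner ℝ x y : ℝ) + ‖y‖^2 := norm_sub_sq_real x y
  rw [e1, mul_pow, e2]
  set a := ‖x‖
  set b := ‖y‖
  set t := (inner ℝ x y : ℝ)
  have key : ε^6 * (a+b)^2 ≤ 4 * a^4 * b^4 := by
    have h1 : ε * (a + b) ≤ 2 * (a*b) := by nlinarith
    have h2 : ε^2 ≤ a * b := by nlinarith
    nlinarith [sq_nonneg (a+b), mul_pos ha hb, sq_nonneg (ε*(a+b)),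
      mul_le_mul h2 h1 (by positivity) (by positivity),
      mul_le_mul h2 h2 (by positivity) (by positivity),
      mul_le_mul (mul_le_mul h2 h2 (by positivity) (by positivity)) (mul_le_mul h1 h1 (by positivity) (by positivity)) (by positivity) (by positivity)]
  have hab : ε^6 ≤ a^3 * b^3 := by
    calc ε^6 = ε^3 * ε^3 := by ring
    _ ≤ a^3 * b^3 := by
        apply mul_le_mul (pow_le_pow_left₀ hε.le hx 3) (pow_le_pow_left₀ hε.le hy 3) (by positivity) (by positivity)
  have hcoef : (a*b - t) * (8*a^4*b^4 - 2*a*b*ε^6) ≥ 0 := by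
    apply mul_nonneg (by linarith)
    nlinarith [mul_le_mul_of_nonneg_left hab (by positivity : (0:ℝ) ≤ 2*a*b), mul_pos ha hb, mul_pos (mul_pos ha hb) (mul_pos ha hb)]
  have hsq : (a-b)^2 * (4*a^4*b^4 - ε^6*(a+b)^2) ≥ 0 :=
    mul_nonneg (sq_nonneg _) (by linarith)
  rw [div_pow, div_mul_eq_mul_div, le_div_iff₀ (by positivity)]
  have hane : a ≠ 0 := ha.ne'
  have hbne : b ≠ 0 := hb.ne'
  field_simp
  ring_nf
  have hp : (0:ℝ) ≤ a^5 * b^5 := by positivity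
  nlinarith [mul_nonneg hp hcoef, mul_nonneg hp hsq]
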